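/- Let L be a real symmetric m×m matrix with L·1 = 0 and kernel exactly span{1}, and let M = L + (n/m) J for a positive real n, where J is the all-ones matrix. Then det M = m·n·det(L̂), where L̂ is L with the first row and column deleted. -/

import Mathlib

open Matrix Finset

theorem stmt15 (m : ℕ) (L : Matrix (Fin (m + 1)) (Fin (m + 1)) ℝ)
    (hLsymm : L.IsSymm) (hpsd : L.PosSemidef)
    (hL1 : L.mulVec (fun _ => (1 : ℝ)) = 0)
    (hker : ∀ u : Fin (m + 1) → ℝ, L.mulVec u = 0 ↔ ∃ c : ℝ, u = fun _ => c)
    (n : ℝ) (hn : 0 < n)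
    (M : Matrix (Fin (m + 1)) (Fin (m + 1)) ℝ)
    (hM : M = L + (n / (m + 1 : ℝ)) • Matrix.of (fun _ _ => (1 : ℝ))) :
    M.det = (m + 1 : ℝ) * n * (L.submatrix Fin.succ Fin.succ).det := by
  have hm : ((m : ℝ) + 1) ≠ 0 := by positivity
  set c : ℝ := n / (m + 1 : ℝ) with hc
  -- row and column sums of L vanish
  have hrow : ∀ k, ∑ l, L k l = 0 := by
    intro k
    have := congrFun hL1 k
    simpa [mulVec, dotProduct] using this
  have hcol : ∀ l, ∑ k, L k l = 0 := by
    intro l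
    calc ∑ k, L k l = ∑ k, L l k := Finset.sum_congr rfl fun k _ => hLsymm.apply l k
    _ = 0 := hrow l
  -- row and column sums of M equal n
  have hMentry : ∀ k l, M k l = L k l + c := by
    intro k l; simp [hM]
  have hcn : c * ((m : ℝ) + 1) = n := by
    rw [hc]; field_simp
  have hMrow : ∀ k, ∑ l, M k l = n := by
    intro k
    simp only [hMentry]
    rw [Finset.sum_add_distrib, hrow, Finset.sum_const]
    simp only [Finset.card_univ, Fintype.card_fin, nsmul_eq_mul, Nat.cast_add, Nat.cast_one,
      zero_add]
    linarith [hcn]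
  have hMcol : ∀ l, ∑ k, M k l = n := by
    intro l
    simp only [hMentry]
    rw [Finset.sum_add_distrib, hcol, Finset.sum_const]
    simp only [Finset.card_univ, Fintype.card_fin, nsmul_eq_mul, Nat.cast_add, Nat.cast_one,
      zero_add]
    linarith [hcn]
  -- the conjugating matrix
  set A : Matrix (Fin (m + 1)) (Fin (m + 1)) ℝ :=
    Matrix.of (fun i j => if i = 0 then 1 else (if i = j then (1 : ℝ) else 0) - 1 / ((m : ℝ) + 1))
    with hA
  have hdetA : A.det = 1 := by
    set E : Matrix (Fin (m + 1)) (Fin (m + 1)) ℝ :=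
      Matrix.of (fun i j => if i = j then (1 : ℝ) else if j = 0 then -(1 / ((m : ℝ) + 1)) else 0)
      with hE
    set C : Matrix (Fin (m + 1)) (Fin (m + 1)) ℝ :=
      Matrix.of (fun i j => if j = 0 then (1 : ℝ) else if i = j then 1 else 0) with hC
    have hAEC : A = E * Cᵀ := by
      ext i j
      simp only [hA, hE, hC, Matrix.mul_apply, Matrix.transpose_apply, Matrix.of_apply]
      rcases eq_or_ne i 0 with hi | hi
      · subst hi
        rw [Finset.sum_eq_single 0]
        · simp
        · intro b _ hb
          simp [hb, Ne.symm hb]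
        · simp
      · rcases eq_or_ne j 0 with hj | hj
        · subst hj
          rw [Finset.sum_eq_single 0]
          · simp [hi]
          · intro b _ hb
            simp [hb, Ne.symm hb]
          · simp
        · have key : ∀ k : Fin (m + 1),
              (if i = k then (1 : ℝ) else if k = 0 then -(1 / ((m : ℝ) + 1)) else 0) *
                (if k = 0 then (1 : ℝ) else if j = k then 1 else 0)
              = (if k = 0 then -(1 / ((m : ℝ) + 1)) else 0) +
                (if k = j then (if i = j then (1 : ℝ) else 0) else 0) := by
            intro k
            rcases eq_or_ne k 0 with hk | hk
            · subst hk
              simp [hi, Ne.symm hj]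
            · rcases eq_or_ne k j with hkj | hkj
              · subst hkj
                simp [hk]
              · simp [hk, hkj, Ne.symm hkj]
          rw [Finset.sum_congr rfl fun k _ => key k, Finset.sum_add_distrib,
            Finset.sum_ite_eq', Finset.sum_ite_eq']
          simp [hi, hj, sub_eq_add_neg, add_comm]
    have hdetE : E.det = 1 := by
      rw [Matrix.det_of_lowerTriangular]
      · simp [hE]
      · intro i j hij
        have h1 : i ≠ j := fun h => by subst h; exact lt_irrefl _ hij
        have hj0 : j ≠ 0 := by
          intro h; subst h
          exact absurd (Fin.zero_le i) (not_le.mpr hij)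
        simp [hE, h1, hj0]
    have hdetC : C.det = 1 := by
      rw [Matrix.det_of_lowerTriangular]
      · simp [hC]
      · intro i j hij
        have h1 : i ≠ j := fun h => by subst h; exact lt_irrefl _ hij
        have hj0 : j ≠ 0 := by
          intro h; subst h
          exact absurd (Fin.zero_le i) (not_le.mpr hij)
        simp [hC, h1, hj0]
    rw [hAEC, Matrix.det_mul, Matrix.det_transpose, hdetE, hdetC, one_mul]
  -- B = A * M
  have hB : A * M = Matrix.of (fun i l => if i = 0 then n else L i l) := by
    ext i l
    simp only [Matrix.mul_apply, hA, Matrix.of_apply]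
    rcases eq_or_ne i 0 with hi | hi
    · simp [hi, hMcol l]
    · simp only [hi, if_false, sub_mul, ite_mul, one_mul, zero_mul]
      rw [Finset.sum_sub_distrib, Finset.sum_ite_eq, ← Finset.mul_sum, hMcol l]
      rw [hMentry i l, hc]
      simp
      field_simp
      ring
  -- D = A * M * Aᵀ
  have hD : A * M * Aᵀ = Matrix.of (fun i j =>
      if i = 0 then (if j = 0 then ((m : ℝ) + 1) * n else 0)
      else (if j = 0 then 0 else L i j)) := by
    rw [hB]
    ext i j
    simp only [Matrix.mul_apply, Matrix.transpose_apply, hA, Matrix.of_apply]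
    rcases eq_or_ne j 0 with hj | hj
    · subst hj
      rcases eq_or_ne i 0 with hi | hi
      · simp [hi, mul_comm]
      · simp [hi, hrow i]
    · simp only [hj, if_false, sub_mul, mul_sub, ite_mul, mul_ite, one_mul, mul_one, zero_mul,
        mul_zero]
      rw [Finset.sum_sub_distrib, Finset.sum_ite_eq]
      rcases eq_or_ne i 0 with hi | hi
      · simp only [hi, if_true, Finset.mem_univ, if_pos]
        rw [← Finset.sum_mul, Finset.sum_const]
        simp only [Finset.card_univ, Fintype.card_fin, nsmul_eq_mul, Nat.cast_add, Nat.cast_one]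
        field_simp
        ring
      · simp only [hi, if_false, Finset.mem_univ, if_pos]
        rw [← Finset.sum_mul, hrow i]
        simp [hj]
  -- conclude
  have hdet : M.det = (A * M * Aᵀ).det := by
    rw [Matrix.det_mul, Matrix.det_mul, Matrix.det_transpose, hdetA, one_mul, mul_one]
  have hsub : ((Matrix.of (fun i j =>
      if i = 0 then (if j = 0 then ((m : ℝ) + 1) * n else 0)
      else (if j = 0 then 0 else L i j)) : Matrix (Fin (m+1)) (Fin (m+1)) ℝ).submatrix
        Fin.succ Fin.succ) = L.submatrix Fin.succ Fin.succ := by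
    ext i j
    simp [Fin.succ_ne_zero]
  rw [hdet, hD, Matrix.det_succ_row_zero, Fin.sum_univ_succ]
  simp [Fin.succ_ne_zero, Fin.succAbove_zero, Matrix.submatrix_apply, hsub]
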